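/- Let X and Y be independent, identically distributed nonnegative regular random variables. Then E[min(X, Y)] ≥ sup_{q ∈ [0,1]} R_X(q). (The revenue of the second-price auction run on a single bidder and one duplicate of her is at least the optimal monopoly revenue from that bidder; this is the single-bidder case of the comparison between the Vickrey auction with duplicates and the lookahead auction.) -/

import Mathlib

open MeasureTheory ProbabilityTheory
open scoped ENNReal
set_option linter.unusedSectionVars false

/-- The price of `X` at quantile `q`: `v_X(q) = inf {t ≥ 0 : P(X > t) ≤ q}`. -/
noncomputable def price {Ω : Type*} [MeasurableSpace Ω] (μ : Measure Ω) (X : Ω → ℝ)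
    (q : ℝ) : ℝ :=
  sInf {t : ℝ | 0 ≤ t ∧ (μ {ω | t < X ω}).toReal ≤ q}

/-- The revenue curve of `X`: `R_X(q) = q · v_X(q)`. -/
noncomputable def revCurve {Ω : Type*} [MeasurableSpace Ω] (μ : Measure Ω) (X : Ω → ℝ)
    (q : ℝ) : ℝ :=
  q * price μ X q

section Helpers

open Set

variable {Ω : Type*} [MeasurableSpace Ω] (μ : Measure Ω) [IsProbabilityMeasure μ] (X : Ω → ℝ)

lemma price_nonneg (q : ℝ) : 0 ≤ price μ X q :=
  Real.sInf_nonneg (fun _ ht => ht.1)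

lemma revCurve_zero : revCurve μ X 0 = 0 := zero_mul _

lemma G_antitone : Antitone (fun t : ℝ => μ {ω | t < X ω}) := by
  intro t t' h
  exact measure_mono (fun ω hω => lt_of_le_of_lt h hω)

lemma exists_mem_S (hX : Measurable X) {q : ℝ} (hq : 0 < q) :
    ∃ t : ℝ, 0 ≤ t ∧ (μ {ω | t < X ω}).toReal ≤ q := by
  have hmble : ∀ n : ℕ, NullMeasurableSet {ω | (n : ℝ) < X ω} μ :=
    fun n => (hX measurableSet_Ioi (t := Set.Ioi (n:ℝ))).nullMeasurableSet
  have hanti : Antitone (fun n : ℕ => {ω | (n : ℝ) < X ω}) := by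
    intro m n h ω hω
    simp only [Set.mem_setOf_eq] at hω ⊢
    exact lt_of_le_of_lt (by exact_mod_cast h) hω
  have hfin : ∃ n : ℕ, μ {ω | (n : ℝ) < X ω} ≠ ⊤ := ⟨0, measure_ne_top μ _⟩
  have hempty : (⋂ n : ℕ, {ω | (n : ℝ) < X ω}) = ∅ := by
    ext ω
    simp only [Set.mem_iInter, Set.mem_setOf_eq, Set.mem_empty_iff_false, iff_false, not_forall,
      not_lt]
    obtain ⟨n, hn⟩ := exists_nat_gt (X ω)
    exact ⟨n, hn.le⟩
  have htend := MeasureTheory.tendsto_measure_iInter_atTop hmble hanti hfin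
  rw [hempty, measure_empty] at htend
  have := htend.eventually_lt_const (show (0:ℝ≥0∞) < ENNReal.ofReal q by
    simpa using ENNReal.ofReal_pos.2 hq)
  obtain ⟨n, hn⟩ := this.exists
  refine ⟨n, Nat.cast_nonneg n, ?_⟩
  exact ENNReal.toReal_le_of_le_ofReal hq.le hn.le

lemma lt_price {q t : ℝ} (ht : 0 ≤ t) (h : t < price μ X q) :
    q < (μ {ω | t < X ω}).toReal := by
  by_contra hc
  push_neg at hc
  have hmem : t ∈ {t : ℝ | 0 ≤ t ∧ (μ {ω | t < X ω}).toReal ≤ q} := ⟨ht, hc⟩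
  have : price μ X q ≤ t := csInf_le ⟨0, fun x hx => hx.1⟩ hmem
  exact absurd h (not_lt.2 this)

lemma le_price (hX : Measurable X) {q t : ℝ} (hq : 0 < q)
    (h : q < (μ {ω | t < X ω}).toReal) : t ≤ price μ X q := by
  obtain ⟨t₀, ht₀⟩ := exists_mem_S μ X hX hq
  refine le_csInf ⟨t₀, ht₀⟩ ?_
  intro s hs
  by_contra hst
  push_neg at hst
  have : (μ {ω | t < X ω}).toReal ≤ (μ {ω | s < X ω}).toReal :=
    ENNReal.toReal_mono (measure_ne_top μ _) (G_antitone μ X hst.le)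
  linarith [hs.2]

lemma helper_lint (f : ℝ → ℝ) (hf : Continuous f) {a b : ℝ} (hab : a ≤ b)
    (hnn : ∀ s ∈ Set.Ioo a b, 0 ≤ f s) :
    ∫⁻ s in Set.Ioo a b, ENNReal.ofReal (f s) = ENNReal.ofReal (∫ s in a..b, f s) := by
  have hint : IntegrableOn f (Set.Ioo a b) :=
    (hf.integrableOn_Icc).mono_set Set.Ioo_subset_Icc_self
  rw [intervalIntegral.integral_of_le hab, integral_Ioc_eq_integral_Ioo,
    MeasureTheory.ofReal_integral_eq_lintegral_ofReal hint
      ((ae_restrict_iff' measurableSet_Ioo).2 (Filter.Eventually.of_forall hnn))]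

lemma sq_lint {a : ℝ} (ha : 0 ≤ a) :
    ∫⁻ s in Set.Ioo 0 a, ENNReal.ofReal (2 * s) = ENNReal.ofReal (a ^ 2) := by
  rw [helper_lint (fun s => 2 * s) (by continuity) ha (fun s hs => by show (0:ℝ) ≤ 2 * s; linarith [hs.1])]
  congr 1
  rw [intervalIntegral.integral_const_mul, integral_id]
  ring

end Helpers

section Helpers2

open Set

variable {Ω : Type*} [MeasurableSpace Ω] (μ : Measure Ω) [IsProbabilityMeasure μ] (X : Ω → ℝ)

lemma G_meas : Measurable (fun t : ℝ => μ {ω | t < X ω}) :=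
  (G_antitone μ X).measurable

lemma g_meas : Measurable (fun t : ℝ => (μ {ω | t < X ω}).toReal) :=
  ENNReal.measurable_toReal.comp (G_meas μ X)

lemma G_tail_le (hX : Measurable X) {C : ℝ}
    (hC : ∀ q ∈ Set.Icc (0:ℝ) 1, revCurve μ X q ≤ C) {t : ℝ} (ht : 0 < t) :
    μ {ω | t < X ω} ≤ ENNReal.ofReal (C / t) := by
  have hC0 : 0 ≤ C := by
    have := hC 0 ⟨le_rfl, zero_le_one⟩
    rwa [revCurve_zero] at this
  set g := (μ {ω | t < X ω}).toReal with hg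
  have hgle1 : g ≤ 1 := by
    rw [hg]
    exact ENNReal.toReal_le_of_le_ofReal zero_le_one (by simpa using prob_le_one)
  rw [ENNReal.le_ofReal_iff_toReal_le (measure_ne_top μ _) (by positivity)]
  by_contra hcon
  push_neg at hcon
  -- C / t < g
  obtain ⟨q', hq1, hq2⟩ := exists_between hcon
  have hq'pos : 0 < q' := lt_of_le_of_lt (by positivity) hq1
  have hq'le1 : q' ≤ 1 := le_trans hq2.le hgle1
  have htle : t ≤ price μ X q' := le_price μ X hX hq'pos hq2
  have : revCurve μ X q' ≤ C := hC q' ⟨hq'pos.le, hq'le1⟩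
  have : q' * t ≤ C := le_trans (by
    have hp := price_nonneg μ X q'
    rw [revCurve]
    nlinarith) this
  have : q' ≤ C / t := (le_div_iff₀ ht).2 this
  linarith

lemma fin_lemma (hX : Measurable X) {C : ℝ}
    (hC : ∀ q ∈ Set.Icc (0:ℝ) 1, revCurve μ X q ≤ C) :
    ∫⁻ t in Set.Ioi (0:ℝ), μ {ω | t < X ω} * μ {ω | t < X ω} ≠ ⊤ := by
  have hC0 : 0 ≤ C := by
    have := hC 0 ⟨le_rfl, zero_le_one⟩
    rwa [revCurve_zero] at this
  set K := max C 1 with hK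
  have hK1 : (1:ℝ) ≤ K := le_max_right _ _
  have hK0 : (0:ℝ) < K := lt_of_lt_of_le one_pos hK1
  have hsplit : Set.Ioi (0:ℝ) = Set.Ioc 0 K ∪ Set.Ioi K := (Set.Ioc_union_Ioi_eq_Ioi hK0.le).symm
  rw [hsplit, lintegral_union measurableSet_Ioi (Set.Ioc_disjoint_Ioi le_rfl)]
  have h1 : ∫⁻ t in Set.Ioc (0:ℝ) K, μ {ω | t < X ω} * μ {ω | t < X ω} ≤ ENNReal.ofReal K := by
    calc ∫⁻ t in Set.Ioc (0:ℝ) K, μ {ω | t < X ω} * μ {ω | t < X ω}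
        ≤ ∫⁻ _ in Set.Ioc (0:ℝ) K, 1 := by
          refine setLIntegral_mono' measurableSet_Ioc (fun t _ => ?_)
          calc μ {ω | t < X ω} * μ {ω | t < X ω} ≤ 1 * 1 :=
                mul_le_mul' prob_le_one prob_le_one
            _ = 1 := one_mul 1
      _ = ENNReal.ofReal K := by
          rw [setLIntegral_const, one_mul, Real.volume_Ioc, sub_zero]
  have hint : IntegrableOn (fun t : ℝ => C^2 * t ^ (-2:ℝ)) (Set.Ioi K) :=
    (integrableOn_Ioi_rpow_of_lt (by norm_num) hK0).const_mul _
  have h2 : ∫⁻ t in Set.Ioi K, μ {ω | t < X ω} * μ {ω | t < X ω} ≤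
      ∫⁻ t in Set.Ioi K, ENNReal.ofReal (C^2 * t ^ (-2:ℝ)) := by
    refine setLIntegral_mono' measurableSet_Ioi (fun t htK => ?_)
    have ht : 0 < t := lt_of_le_of_lt hK0.le htK
    have hle := G_tail_le μ X hX hC ht
    calc μ {ω | t < X ω} * μ {ω | t < X ω}
        ≤ ENNReal.ofReal (C / t) * ENNReal.ofReal (C / t) := mul_le_mul' hle hle
      _ = ENNReal.ofReal ((C / t) * (C / t)) := (ENNReal.ofReal_mul (by positivity)).symm
      _ = ENNReal.ofReal (C^2 * t ^ (-2:ℝ)) := by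
          congr 1
          rw [Real.rpow_neg ht.le, Real.rpow_two]
          field_simp
  have h2' : ∫⁻ t in Set.Ioi K, ENNReal.ofReal (C^2 * t ^ (-2:ℝ)) < ⊤ :=
    hint.lintegral_lt_top
  exact ENNReal.add_ne_top.2 ⟨ne_top_of_le_ne_top (ENNReal.ofReal_ne_top) h1,
    ne_top_of_le_ne_top h2'.ne h2⟩

lemma step1 (Y : Ω → ℝ) (hX : Measurable X) (hY : Measurable Y)
    (hXnn : ∀ ω, 0 ≤ X ω) (hYnn : ∀ ω, 0 ≤ Y ω)
    (hindep : IndepFun X Y μ) (hid : IdentDistrib X Y μ μ) :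
    ∫⁻ ω, ENNReal.ofReal (min (X ω) (Y ω)) ∂μ =
      ∫⁻ t in Set.Ioi (0:ℝ), μ {ω | t < X ω} * μ {ω | t < X ω} := by
  rw [MeasureTheory.lintegral_eq_lintegral_meas_lt μ
    (Filter.Eventually.of_forall (fun ω => le_min (hXnn ω) (hYnn ω)))
    ((hX.min hY).aemeasurable)]
  refine lintegral_congr (fun t => ?_)
  have hset : {a | t < min (X a) (Y a)} = X ⁻¹' Set.Ioi t ∩ Y ⁻¹' Set.Ioi t := by
    ext ω
    simp [lt_min_iff]
  rw [hset, hindep.measure_inter_preimage_eq_mul _ _ measurableSet_Ioi measurableSet_Ioi,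
    ← hid.measure_mem_eq measurableSet_Ioi]
  rfl

end Helpers2

section Helpers3

open Set

variable {Ω : Type*} [MeasurableSpace Ω] (μ : Measure Ω) [IsProbabilityMeasure μ] (X : Ω → ℝ)

lemma rev_one_nonneg : 0 ≤ revCurve μ X 1 := by
  rw [revCurve, one_mul]; exact price_nonneg μ X 1

/-- Part B: the Tonelli comparison. -/
lemma tonelli_step (hX : Measurable X) :
    ∫⁻ s in Set.Ioo (0:ℝ) 1, ENNReal.ofReal (2 * revCurve μ X s) ≤
      ∫⁻ t in Set.Ioi (0:ℝ), μ {ω | t < X ω} * μ {ω | t < X ω} := by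
  set g : ℝ → ℝ := fun t => (μ {ω | t < X ω}).toReal with hgdef
  have hgmeas : Measurable g := g_meas μ X
  have hgnn : ∀ t, 0 ≤ g t := fun t => ENNReal.toReal_nonneg
  have hgle1 : ∀ t, g t ≤ 1 := fun t =>
    ENNReal.toReal_le_of_le_ofReal zero_le_one (by simpa using prob_le_one)
  set K : Set (ℝ × ℝ) := {p : ℝ × ℝ | 0 < p.1 ∧ (0 < p.2 ∧ p.2 < 1) ∧ p.2 < g p.1} with hK
  have hKmeas : MeasurableSet K := by
    apply MeasurableSet.inter
    · exact measurable_fst measurableSet_Ioi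
    apply MeasurableSet.inter
    · exact (measurable_snd measurableSet_Ioi).inter (measurable_snd measurableSet_Iio)
    · exact measurableSet_lt measurable_snd (hgmeas.comp measurable_fst)
  set F : ℝ → ℝ → ℝ≥0∞ := fun t s => K.indicator (fun p => ENNReal.ofReal (2 * p.2)) (t, s)
    with hF
  have hFmeas : AEMeasurable (Function.uncurry F) ((volume : Measure ℝ).prod volume) := by
    have : Function.uncurry F = K.indicator (fun p => ENNReal.ofReal (2 * p.2)) := by
      funext p
      simp [Function.uncurry, hF]
    rw [this]
    exact ((measurable_const.mul measurable_snd).ennreal_ofReal.indicator hKmeas).aemeasurable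
  have hswap := MeasureTheory.lintegral_lintegral_swap hFmeas
  -- evaluate the t-side (inner integral over s)
  have ht_side : ∀ t : ℝ, ∫⁻ s, F t s =
      (Set.Ioi (0:ℝ)).indicator (fun t => μ {ω | t < X ω} * μ {ω | t < X ω}) t := by
    intro t
    by_cases ht : 0 < t
    · have hfun : (fun s => F t s) =
          (Set.Ioo (0:ℝ) (g t)).indicator (fun s => ENNReal.ofReal (2 * s)) := by
        funext s
        by_cases hs : s ∈ Set.Ioo (0:ℝ) (g t)
        · rw [Set.indicator_of_mem hs]
          have hmem : (t, s) ∈ K := ⟨ht, ⟨hs.1, lt_of_lt_of_le hs.2 (hgle1 t)⟩, hs.2⟩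
          simp [hF, Set.indicator_of_mem hmem]
        · rw [Set.indicator_of_notMem hs]
          have hmem : (t, s) ∉ K := by
            intro hmem
            exact hs ⟨hmem.2.1.1, hmem.2.2⟩
          simp [hF, Set.indicator_of_notMem hmem]
      rw [hfun, lintegral_indicator measurableSet_Ioo, sq_lint (hgnn t),
        Set.indicator_of_mem (Set.mem_Ioi.2 ht)]
      rw [pow_two, ENNReal.ofReal_mul (hgnn t), hgdef]
      simp [ENNReal.ofReal_toReal (measure_ne_top μ _)]
    · have hfun : (fun s => F t s) = fun _ => 0 := by
        funext s
        have hmem : (t, s) ∉ K := fun hmem => ht hmem.1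
        simp [hF, Set.indicator_of_notMem hmem]
      rw [hfun, lintegral_zero, Set.indicator_of_notMem (by simpa using ht)]
  -- evaluate the s-side (inner integral over t), with lower bound
  have hs_side : ∀ s : ℝ, s ∈ Set.Ioo (0:ℝ) 1 →
      ENNReal.ofReal (2 * revCurve μ X s) ≤ ∫⁻ t, F t s := by
    intro s hs
    have hfun : (fun t => F t s) =
        ({t : ℝ | 0 < t ∧ s < g t}).indicator (fun _ => ENNReal.ofReal (2 * s)) := by
      funext t
      by_cases ht : t ∈ {t : ℝ | 0 < t ∧ s < g t}
      · rw [Set.indicator_of_mem ht]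
        have hmem : (t, s) ∈ K := ⟨ht.1, ⟨hs.1, hs.2⟩, ht.2⟩
        simp [hF, Set.indicator_of_mem hmem]
      · rw [Set.indicator_of_notMem ht]
        have hmem : (t, s) ∉ K := fun hmem => ht ⟨hmem.1, hmem.2.2⟩
        simp [hF, Set.indicator_of_notMem hmem]
    have hsetmeas : MeasurableSet {t : ℝ | 0 < t ∧ s < g t} :=
      measurableSet_Ioi.inter (measurableSet_lt measurable_const hgmeas)
    rw [hfun, lintegral_indicator_const hsetmeas]
    have hsub : Set.Ioo 0 (price μ X s) ⊆ {t : ℝ | 0 < t ∧ s < g t} := by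
      intro t ht
      exact ⟨ht.1, lt_price μ X ht.1.le ht.2⟩
    calc ENNReal.ofReal (2 * revCurve μ X s)
        = ENNReal.ofReal (2 * s) * ENNReal.ofReal (price μ X s) := by
          rw [← ENNReal.ofReal_mul (by linarith [hs.1])]
          congr 1
          rw [revCurve]; ring
      _ = ENNReal.ofReal (2 * s) * volume (Set.Ioo 0 (price μ X s)) := by
          rw [Real.volume_Ioo, sub_zero]
      _ ≤ ENNReal.ofReal (2 * s) * volume {t : ℝ | 0 < t ∧ s < g t} :=
          by gcongr
  calc ∫⁻ s in Set.Ioo (0:ℝ) 1, ENNReal.ofReal (2 * revCurve μ X s)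
      = ∫⁻ s, (Set.Ioo (0:ℝ) 1).indicator (fun s => ENNReal.ofReal (2 * revCurve μ X s)) s :=
        (lintegral_indicator measurableSet_Ioo _).symm
    _ ≤ ∫⁻ s, ∫⁻ t, F t s := by
        refine lintegral_mono (fun s => ?_)
        by_cases hs : s ∈ Set.Ioo (0:ℝ) 1
        · rw [Set.indicator_of_mem hs]
          exact hs_side s hs
        · rw [Set.indicator_of_notMem hs]
          exact zero_le
    _ = ∫⁻ t, ∫⁻ s, F t s := hswap.symm
    _ = ∫⁻ t, (Set.Ioi (0:ℝ)).indicator (fun t => μ {ω | t < X ω} * μ {ω | t < X ω}) t :=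
        lintegral_congr ht_side
    _ = ∫⁻ t in Set.Ioi (0:ℝ), μ {ω | t < X ω} * μ {ω | t < X ω} :=
        lintegral_indicator measurableSet_Ioi _

end Helpers3


section Helpers4

open Set

lemma int1 (c a : ℝ) : ∫ s in (0:ℝ)..a, c * s = c * a ^ 2 / 2 := by
  have h : ∀ s ∈ Set.uIcc (0:ℝ) a, HasDerivAt (fun x => c * x ^ 2 / 2) (c * s) s := by
    intro s _
    have := ((hasDerivAt_pow 2 s).const_mul c).div_const 2
    refine this.congr_deriv ?_
    push_cast
    ring
  rw [intervalIntegral.integral_eq_sub_of_hasDerivAt h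
    ((continuous_const.mul continuous_id).intervalIntegrable _ _)]
  ring

lemma int2 (c a : ℝ) : ∫ s in a..(1:ℝ), c * (1 - s) = c * (1 - a) ^ 2 / 2 := by
  have h : ∀ s ∈ Set.uIcc a (1:ℝ), HasDerivAt (fun x => c * (x - x ^ 2 / 2)) (c * (1 - s)) s := by
    intro s _
    have := ((hasDerivAt_id s).sub ((hasDerivAt_pow 2 s).div_const 2)).const_mul c
    refine this.congr_deriv ?_
    push_cast
    ring
  rw [intervalIntegral.integral_eq_sub_of_hasDerivAt h
    ((continuous_const.mul (continuous_const.sub continuous_id)).intervalIntegrable _ _)]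
  ring

variable {Ω : Type*} [MeasurableSpace Ω] (μ : Measure Ω) [IsProbabilityMeasure μ] (X : Ω → ℝ)

/-- Part A: chord bound from concavity. -/
lemma chord_step (hreg : ConcaveOn ℝ (Set.Icc (0:ℝ) 1) (revCurve μ X))
    {qs : ℝ} (hqs : qs ∈ Set.Icc (0:ℝ) 1) (hRpos : 0 < revCurve μ X qs) :
    ENNReal.ofReal (revCurve μ X qs) ≤
      ∫⁻ s in Set.Ioo (0:ℝ) 1, ENNReal.ofReal (2 * revCurve μ X s) := by
  have hqs0 : 0 < qs := by
    rcases lt_or_eq_of_le hqs.1 with h | h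
    · exact h
    · exfalso
      rw [← h, revCurve_zero] at hRpos
      exact lt_irrefl 0 hRpos
  have hqs1 : qs ≤ 1 := hqs.2
  have h0mem : (0:ℝ) ∈ Set.Icc (0:ℝ) 1 := ⟨le_rfl, zero_le_one⟩
  have h1mem : (1:ℝ) ∈ Set.Icc (0:ℝ) 1 := ⟨zero_le_one, le_rfl⟩
  -- piece 1 : over Ioo 0 qs
  have piece1 : ENNReal.ofReal (revCurve μ X qs * qs) ≤
      ∫⁻ s in Set.Ioo (0:ℝ) qs, ENNReal.ofReal (2 * revCurve μ X s) := by
    have hcomp : ∫⁻ s in Set.Ioo (0:ℝ) qs,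
        ENNReal.ofReal ((2 * revCurve μ X qs / qs) * s) =
        ENNReal.ofReal (revCurve μ X qs * qs) := by
      rw [helper_lint _ (by continuity) hqs0.le
        (fun s hs => le_of_lt (mul_pos (div_pos (by linarith) hqs0) hs.1))]
      rw [int1]
      congr 1
      field_simp
    rw [← hcomp]
    refine setLIntegral_mono' measurableSet_Ioo (fun s hs => ?_)
    refine ENNReal.ofReal_le_ofReal ?_
    have hs0 : 0 < s := hs.1
    have hsq : s < qs := hs.2
    have ha0 : (0:ℝ) ≤ s / qs := by positivity
    have ha1 : s / qs ≤ 1 := by rw [div_le_one hqs0]; exact hsq.le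
    have hb0 : (0:ℝ) ≤ 1 - s / qs := by linarith
    have hab : s / qs + (1 - s / qs) = 1 := by ring
    have hcon := hreg.2 hqs h0mem ha0 hb0 hab
    simp only [smul_eq_mul, mul_zero, add_zero, revCurve_zero] at hcon
    have hacomb : s / qs * qs = s := by field_simp
    rw [hacomb] at hcon
    -- hcon : s / qs * revCurve qs + (1 - s/qs) * 0 ≤ revCurve s
    have key : 2 * revCurve μ X qs / qs * s = 2 * (s / qs * revCurve μ X qs) := by
      field_simp
    rw [key]
    linarith
  -- piece 2 : over Ico qs 1
  have piece2 : ENNReal.ofReal (revCurve μ X qs * (1 - qs)) ≤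
      ∫⁻ s in Set.Ico qs 1, ENNReal.ofReal (2 * revCurve μ X s) := by
    rcases eq_or_lt_of_le hqs1 with hq1 | hq1
    · rw [← hq1]
      simp
    · have h1q : (0:ℝ) < 1 - qs := by linarith
      rw [setLIntegral_congr (MeasureTheory.Ioo_ae_eq_Ico (μ := volume) (a := qs) (b := 1)).symm]
      have hcomp : ∫⁻ s in Set.Ioo qs 1,
          ENNReal.ofReal ((2 * revCurve μ X qs / (1 - qs)) * (1 - s)) =
          ENNReal.ofReal (revCurve μ X qs * (1 - qs)) := by
        rw [helper_lint _ (by continuity) hq1.le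
          (fun s hs => le_of_lt (mul_pos (div_pos (by linarith) h1q) (by linarith [hs.2])))]
        rw [int2]
        congr 1
        field_simp
      rw [← hcomp]
      refine setLIntegral_mono' measurableSet_Ioo (fun s hs => ?_)
      refine ENNReal.ofReal_le_ofReal ?_
      have hsq : qs < s := hs.1
      have hs1 : s < 1 := hs.2
      have ha0 : (0:ℝ) ≤ (1 - s) / (1 - qs) := by
        apply div_nonneg <;> linarith
      have hb0 : (0:ℝ) ≤ (s - qs) / (1 - qs) := by
        apply div_nonneg <;> linarith
      have hab : (1 - s) / (1 - qs) + (s - qs) / (1 - qs) = 1 := by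
        field_simp
        ring
      have hcon := hreg.2 hqs h1mem ha0 hb0 hab
      simp only [smul_eq_mul, mul_one] at hcon
      have hacomb : (1 - s) / (1 - qs) * qs + (s - qs) / (1 - qs) = s := by
        field_simp
        ring
      rw [hacomb] at hcon
      have hR1 : 0 ≤ revCurve μ X 1 := rev_one_nonneg μ X
      have hb0' : 0 ≤ (s - qs) / (1 - qs) * revCurve μ X 1 := by positivity
      have key : 2 * revCurve μ X qs / (1 - qs) * (1 - s) =
          2 * ((1 - s) / (1 - qs) * revCurve μ X qs) := by
        field_simp
      rw [key]
      linarith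
  -- combine
  have hdisj : Disjoint (Set.Ioo (0:ℝ) qs) (Set.Ico qs 1) :=
    Set.disjoint_left.2 (fun x hx hx' => absurd hx.2 (not_lt.2 hx'.1))
  have hunion : Set.Ioo (0:ℝ) qs ∪ Set.Ico qs 1 = Set.Ioo (0:ℝ) 1 :=
    Set.Ioo_union_Ico_eq_Ioo hqs0 hqs1
  calc ENNReal.ofReal (revCurve μ X qs)
      = ENNReal.ofReal (revCurve μ X qs * qs) +
        ENNReal.ofReal (revCurve μ X qs * (1 - qs)) := by
        rw [← ENNReal.ofReal_add (by positivity) (by nlinarith)]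
        congr 1
        ring
    _ ≤ (∫⁻ s in Set.Ioo (0:ℝ) qs, ENNReal.ofReal (2 * revCurve μ X s)) +
        ∫⁻ s in Set.Ico qs 1, ENNReal.ofReal (2 * revCurve μ X s) := add_le_add piece1 piece2
    _ = ∫⁻ s in Set.Ioo (0:ℝ) qs ∪ Set.Ico qs 1, ENNReal.ofReal (2 * revCurve μ X s) :=
        (lintegral_union measurableSet_Ico hdisj).symm
    _ = ∫⁻ s in Set.Ioo (0:ℝ) 1, ENNReal.ofReal (2 * revCurve μ X s) := by rw [hunion]

end Helpers4

section Helpers5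

open Set

variable {Ω : Type*} [MeasurableSpace Ω] (μ : Measure Ω) [IsProbabilityMeasure μ] (X : Ω → ℝ)

lemma rev_bounded (hreg : ConcaveOn ℝ (Set.Icc (0:ℝ) 1) (revCurve μ X)) :
    ∃ C : ℝ, ∀ q ∈ Set.Icc (0:ℝ) 1, revCurve μ X q ≤ C := by
  refine ⟨2 * |revCurve μ X (1/2)|, fun q hq => ?_⟩
  have h0mem : (0:ℝ) ∈ Set.Icc (0:ℝ) 1 := ⟨le_rfl, zero_le_one⟩
  have h1mem : (1:ℝ) ∈ Set.Icc (0:ℝ) 1 := ⟨zero_le_one, le_rfl⟩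
  have habs : revCurve μ X (1/2) ≤ |revCurve μ X (1/2)| := le_abs_self _
  have habs0 : 0 ≤ |revCurve μ X (1/2)| := abs_nonneg _
  rcases le_or_gt (revCurve μ X q) 0 with hneg | hpos
  · linarith
  have hq0 : 0 < q := by
    rcases lt_or_eq_of_le hq.1 with h | h
    · exact h
    · exfalso; rw [← h, revCurve_zero] at hpos; exact lt_irrefl 0 hpos
  rcases le_or_gt q (1/2) with hhalf | hhalf
  · -- q ∈ (0, 1/2] : express 1/2 as combo of q and 1
    have h1q : (0:ℝ) < 1 - q := by linarith [hq.2]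
    set a : ℝ := 1 / (2 * (1 - q)) with ha
    have ha0 : 0 ≤ a := by positivity
    have ha12 : 1/2 ≤ a := by
      rw [ha, le_div_iff₀ (by linarith)]
      linarith
    have ha1 : a ≤ 1 := by
      rw [ha, div_le_one (by linarith)]
      linarith
    have hb0 : (0:ℝ) ≤ 1 - a := by linarith
    have hcon := hreg.2 hq h1mem ha0 hb0 (by ring)
    simp only [smul_eq_mul, mul_one] at hcon
    have hcomb : a * q + (1 - a) = 1/2 := by
      rw [ha]; field_simp; ring
    rw [hcomb] at hcon
    have hR1 : 0 ≤ revCurve μ X 1 := rev_one_nonneg μ X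
    have h1 : a * revCurve μ X q ≤ |revCurve μ X (1/2)| := by nlinarith
    nlinarith
  · -- q ∈ (1/2, 1] : express 1/2 as combo of q and 0
    set a : ℝ := 1 / (2 * q) with ha
    have ha0 : 0 ≤ a := by positivity
    have ha12 : 1/2 ≤ a := by
      rw [ha, le_div_iff₀ (by linarith)]
      linarith [hq.2]
    have ha1 : a ≤ 1 := by
      rw [ha, div_le_one (by linarith)]
      linarith
    have hb0 : (0:ℝ) ≤ 1 - a := by linarith
    have hcon := hreg.2 hq h0mem ha0 hb0 (by ring)
    simp only [smul_eq_mul, mul_zero, add_zero, revCurve_zero] at hcon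
    have hcomb : a * q = 1/2 := by
      rw [ha]; field_simp
    rw [hcomb] at hcon
    -- hcon : a * revCurve q + (1-a) * 0 ≤ revCurve (1/2)
    have h1 : a * revCurve μ X q ≤ |revCurve μ X (1/2)| := by nlinarith
    nlinarith

end Helpers5

/-- **Single-bidder Bulow–Klemperer.** For `X, Y` i.i.d. nonnegative and regular
(concave revenue curve), the expected revenue `E[min(X,Y)]` of the second-price
auction on a bidder and her duplicate is at least the optimal monopoly revenue
`sup_{q ∈ [0,1]} R_X(q)`. -/
theorem stmt_18 {Ω : Type*} [MeasurableSpace Ω] (μ : Measure Ω) [IsProbabilityMeasure μ]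
    (X Y : Ω → ℝ) (hX : Measurable X) (hY : Measurable Y)
    (hXnn : ∀ ω, 0 ≤ X ω) (hYnn : ∀ ω, 0 ≤ Y ω)
    (hindep : IndepFun X Y μ)
    (hid : IdentDistrib X Y μ μ)
    (hreg : ConcaveOn ℝ (Set.Icc (0:ℝ) 1) (revCurve μ X)) :
    sSup (revCurve μ X '' Set.Icc (0:ℝ) 1) ≤ ∫ ω, min (X ω) (Y ω) ∂μ := by
  have hminnn : ∀ ω, 0 ≤ min (X ω) (Y ω) := fun ω => le_min (hXnn ω) (hYnn ω)
  have hintnonneg : 0 ≤ ∫ ω, min (X ω) (Y ω) ∂μ := integral_nonneg hminnn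
  obtain ⟨C, hC⟩ := rev_bounded μ X hreg
  have hfin := fin_lemma μ X hX hC
  have hstep1 := step1 μ X Y hX hY hXnn hYnn hindep hid
  have hI : ∫ ω, min (X ω) (Y ω) ∂μ =
      (∫⁻ t in Set.Ioi (0:ℝ), μ {ω | t < X ω} * μ {ω | t < X ω}).toReal := by
    rw [integral_eq_lintegral_of_nonneg_ae (Filter.Eventually.of_forall hminnn)
      ((hX.min hY).aestronglyMeasurable), hstep1]
  refine Real.sSup_le ?_ hintnonneg
  rintro x ⟨q, hq, rfl⟩
  rcases le_or_gt (revCurve μ X q) 0 with h | h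
  · exact le_trans h hintnonneg
  · have hlow := le_trans (chord_step μ X hreg hq h) (tonelli_step μ X hX)
    rw [hI]
    have := ENNReal.toReal_mono hfin hlow
    rwa [ENNReal.toReal_ofReal h.le] at this
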